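/- Let r ≥ 1 and let F be a set of permutations of {1,…,n} with |F| ≥ 2. Then opt_weak,c,r(F) < 2^r·ln(|F|). -/

import Mathlib

/-- `GuessForce ok V m` means: in the mistake-bound game with weak (yes/no) reinforcement
where queries have type `Q`, guesses have type `A`, and `ok q g f` says that guess `g` is a
correct answer to query `q` when the hidden target is `f`, an (adaptive) adversary whose
answers must stay consistent with some member of the current version space `V` can force
every deterministic learner to be answered "no" at least `m` times.
At each step the adversary chooses a query `q` and, depending on the learner's guess `g`,
either answers "no" (`c g = true`, one more mistake, continuing from the consistent
functions for which the guess is wrong) or answers "yes" (`c g = false`, continuing from the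
consistent functions for which the guess is correct). -/
inductive GuessForce {α Q A : Type*} (ok : Q → A → α → Prop) : Set α → ℕ → Prop where
  | zero (V : Set α) : V.Nonempty → GuessForce ok V 0
  | step (V : Set α) (m : ℕ) (q : Q) (c : A → Bool)
      (hne : ∀ g : A, (if c g then {f ∈ V | ¬ ok q g f} else {f ∈ V | ok q g f}).Nonempty)
      (h : ∀ g : A, GuessForce ok (if c g then {f ∈ V | ¬ ok q g f} else {f ∈ V | ok q g f})
        (if c g then m else m + 1)) :
      GuessForce ok V (m + 1)

/-- `opt_weak,c,r(F)`: the comparison model. In each round the adversary chooses `r` distinct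
ordered pairs of distinct inputs, and the learner guesses, for each pair `(i,j)`, whether
`f i < f j`; weak reinforcement (told only whether all `r` guesses are correct). -/
noncomputable def optComp (n r : ℕ) (F : Set (Equiv.Perm (Fin n))) : ℕ :=
  sSup {m | GuessForce
    (fun (x : {x : Fin r → Fin n × Fin n // Function.Injective x ∧ ∀ k, (x k).1 ≠ (x k).2})
         (g : Fin r → Bool) f =>
      ∀ k, (g k = true ↔ f (x.1 k).1 < f (x.1 k).2)) F m}

lemma ncard_biUnion_le' {A α : Type*} (s : Finset A) (C : A → Set α) :
    (⋃ g ∈ s, C g).ncard ≤ ∑ g ∈ s, (C g).ncard := by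
  classical
  induction s using Finset.induction with
  | empty => simp
  | insert _ _ hnot ih =>
      rename_i a s
      rw [Finset.set_biUnion_insert, Finset.sum_insert hnot]
      exact le_trans (Set.ncard_union_le _ _) (add_le_add_right ih _)

lemma guessforce_card_bound {α Q A : Type*} [Fintype A] [Nonempty A]
    {ok : Q → A → α → Prop} (hex : ∀ q (f : α), ∃ g, ok q g f)
    {V : Set α} {m : ℕ} (hGF : GuessForce ok V m) (hV : V.Finite) :
    (Fintype.card A : ℝ) ^ m ≤ ((Fintype.card A : ℝ) - 1) ^ m * V.ncard := by
  set N : ℕ := Fintype.card A with hN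
  have hN1 : (1 : ℝ) ≤ (N : ℝ) := by exact_mod_cast Fintype.card_pos
  revert hV
  induction hGF with
  | zero V hne =>
      intro hV
      have : 0 < V.ncard := (Set.ncard_pos hV).mpr hne
      simp only [pow_zero, one_mul]
      exact_mod_cast this
  | step V m q c hne h ih =>
      intro hV
      classical
      -- the classes of targets sharing a correct answer vector
      set C : A → Set α := fun g => {f ∈ V | ok q g f} with hC
      obtain ⟨g0, -, hg0⟩ := Finset.exists_max_image (Finset.univ : Finset A)
        (fun g => (C g).ncard) ⟨Classical.arbitrary A, Finset.mem_univ _⟩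
      have hCsub : ∀ g, C g ⊆ V := fun g => Set.sep_subset _ _
      -- |V| ≤ N * |C g0|
      have hcover : V ⊆ ⋃ g ∈ (Finset.univ : Finset A), C g := by
        intro f hf
        obtain ⟨g, hg⟩ := hex q f
        exact Set.mem_biUnion (Finset.mem_univ g) ⟨hf, hg⟩
      have hmaj : V.ncard ≤ N * (C g0).ncard := by
        calc V.ncard ≤ (⋃ g ∈ (Finset.univ : Finset A), C g).ncard :=
              Set.ncard_le_ncard hcover
                (Set.Finite.biUnion (Finset.finite_toSet _) (fun g _ => hV.subset (hCsub g)))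
          _ ≤ ∑ g ∈ Finset.univ, (C g).ncard := ncard_biUnion_le' _ _
          _ ≤ N * (C g0).ncard := by
              have := Finset.sum_le_card_nsmul Finset.univ (fun g => (C g).ncard)
                ((C g0).ncard) (fun g _ => hg0 g (Finset.mem_univ g))
              simpa [hN, smul_eq_mul] using this
      have hc0V : (C g0).ncard ≤ V.ncard := Set.ncard_le_ncard (hCsub g0) hV
      have hmajR : (V.ncard : ℝ) ≤ (N : ℝ) * (C g0).ncard := by exact_mod_cast hmaj
      have hpow : (0 : ℝ) ≤ ((N : ℝ) - 1) ^ m := pow_nonneg (by linarith) m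
      cases hcg : c g0 with
      | true =>
          have ih0 := ih g0
          rw [hcg] at ih0
          simp only [if_true] at ih0
          have hWsub : {f ∈ V | ¬ ok q g0 f} = V \ C g0 := by
            ext f; simp [hC, Set.mem_diff]
          have ih1 := ih0 (hV.subset (Set.sep_subset _ _))
          rw [hWsub, Set.cast_ncard_sdiff (hCsub g0) hV] at ih1
          rw [pow_succ, pow_succ]
          have hc0VR : ((C g0).ncard : ℝ) ≤ (V.ncard : ℝ) := by exact_mod_cast hc0V
          nlinarith [mul_le_mul_of_nonneg_right ih1 (le_trans zero_le_one hN1)]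
      | false =>
          have ih0 := ih g0
          rw [hcg] at ih0
          simp only [if_false, Bool.false_eq_true] at ih0
          have ih1 := ih0 (hV.subset (Set.sep_subset _ _))
          refine le_trans ih1 ?_
          have : ({f ∈ V | ok q g0 f}).ncard ≤ V.ncard := Set.ncard_le_ncard (Set.sep_subset _ _) hV
          have hpow' : (0 : ℝ) ≤ ((N : ℝ) - 1) ^ (m + 1) := pow_nonneg (by linarith) (m + 1)
          have : (({f ∈ V | ok q g0 f}).ncard : ℝ) ≤ (V.ncard : ℝ) := by exact_mod_cast this
          nlinarith

/-- Let `r ≥ 1` and let `F` be a set of permutations of `{1,…,n}` with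
`|F| ≥ 2`. Then `opt_weak,c,r(F) < 2^r·ln |F|`. -/
theorem stmt15 (n r : ℕ) (hr : 1 ≤ r) (F : Set (Equiv.Perm (Fin n))) (hF : 2 ≤ F.ncard) :
    (optComp n r F : ℝ) < (2 : ℝ) ^ r * Real.log F.ncard := by
  classical
  set ok := fun (x : {x : Fin r → Fin n × Fin n // Function.Injective x ∧ ∀ k, (x k).1 ≠ (x k).2})
         (g : Fin r → Bool) (f : Equiv.Perm (Fin n)) =>
      ∀ k, (g k = true ↔ f (x.1 k).1 < f (x.1 k).2) with hok
  have hex : ∀ q (f : Equiv.Perm (Fin n)), ∃ g, ok q g f := by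
    intro q f
    exact ⟨fun k => decide (f (q.1 k).1 < f (q.1 k).2), fun k => by simp⟩
  have hFfin : F.Finite := Set.toFinite F
  have hcardA : (Fintype.card (Fin r → Bool) : ℝ) = (2 : ℝ) ^ r := by
    simp [Fintype.card_fun]
  obtain ⟨N, hNdef⟩ : ∃ N : ℝ, N = (2 : ℝ) ^ r := ⟨_, rfl⟩
  rw [← hNdef] at hcardA
  have hN2 : (2 : ℝ) ≤ N := by
    rw [hNdef]
    calc (2:ℝ) = 2 ^ 1 := (pow_one 2).symm
      _ ≤ 2 ^ r := by
        apply pow_le_pow_right₀ (by norm_num) hr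
  have hN0 : (0 : ℝ) < N := lt_of_lt_of_le two_pos hN2
  have hlogF : 0 < Real.log F.ncard := Real.log_pos (by exact_mod_cast hF)
  -- key: every m in the set satisfies the size bound
  have key : ∀ m ∈ {m | GuessForce ok F m}, N ^ m ≤ (N - 1) ^ m * F.ncard := by
    intro m hm
    have := guessforce_card_bound hex hm hFfin
    rwa [hcardA] at this
  -- from the size bound, m < N * log |F|
  have bound : ∀ m ∈ {m | GuessForce ok F m}, (m : ℝ) < N * Real.log F.ncard := by
    intro m hm
    have hb := key m hm
    -- log N - log (N-1) > 1/N
    have hN1pos : (0 : ℝ) < N - 1 := by linarith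
    have hlt : Real.log ((N - 1) / N) < (N - 1) / N - 1 :=
      Real.log_lt_sub_one_of_pos (div_pos hN1pos hN0)
        (ne_of_lt ((div_lt_one hN0).mpr (by linarith)))
    have hdiff : 1 / N < Real.log N - Real.log (N - 1) := by
      rw [Real.log_div (by linarith) (by linarith)] at hlt
      have : (N - 1) / N - 1 = -(1 / N) := by field_simp; ring
      rw [this] at hlt
      linarith
    -- take logs of hb
    have hFpos : (0 : ℝ) < F.ncard := by
      have : (2 : ℝ) ≤ F.ncard := by exact_mod_cast hF
      linarith
    have hlogb : (m : ℝ) * Real.log N ≤ (m : ℝ) * Real.log (N - 1) + Real.log F.ncard := by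
      have h1 : Real.log (N ^ m) ≤ Real.log ((N - 1) ^ m * F.ncard) :=
        Real.log_le_log (by positivity) hb
      rwa [Real.log_mul (by positivity) (by positivity), Real.log_pow, Real.log_pow] at h1
    have hmlstrict : m = 0 ∨ (m : ℝ) * (1 / N) < Real.log F.ncard := by
      by_cases hm0 : m = 0
      · exact Or.inl hm0
      · right
        have hmp : (0 : ℝ) < m := by exact_mod_cast Nat.pos_of_ne_zero hm0
        nlinarith
    rcases hmlstrict with hm0 | hml
    · simp only [hm0, Nat.cast_zero]
      positivity
    · calc (m : ℝ) = (m * (1 / N)) * N := by field_simp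
        _ < Real.log F.ncard * N := by
            exact mul_lt_mul_of_pos_right hml hN0
        _ = N * Real.log F.ncard := mul_comm _ _
  -- conclude via sSup
  have hzero : (0 : ℕ) ∈ {m | GuessForce ok F m} := by
    exact GuessForce.zero F (Set.nonempty_of_ncard_ne_zero (by omega))
  have hbdd : BddAbove {m | GuessForce ok F m} := by
    refine ⟨⌈N * Real.log F.ncard⌉₊, fun m hm => ?_⟩
    have : (m : ℝ) ≤ (⌈N * Real.log F.ncard⌉₊ : ℝ) :=
      le_trans (le_of_lt (bound m hm)) (Nat.le_ceil _)
    exact_mod_cast this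
  have hmem : optComp n r F ∈ {m | GuessForce ok F m} := by
    rw [optComp, hok]
    exact Nat.sSup_mem ⟨0, hzero⟩ hbdd
  have := bound _ hmem
  rwa [hNdef] at this
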